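/- The zeros of the Jacobi theta function θ (with Im(τ) > 0) are exactly the lattice points ℤ + τℤ, and each zero is simple. -/

import Mathlib

open Complex

/-- The Jacobi theta function
`θ(t) = -∑_{j∈ℤ} exp(πi(j+1/2)²τ + 2πi(j+1/2)(t+1/2))`. -/
noncomputable def jTheta (τ t : ℂ) : ℂ :=
  -∑' j : ℤ, Complex.exp (Real.pi * Complex.I * ((j : ℂ) + 1/2)^2 * τ +
    2 * Real.pi * Complex.I * ((j : ℂ) + 1/2) * (t + 1/2))

open Complex Filter Finset Topology
open scoped Real

namespace JTAux

lemma norm_prod_sub_one_le {ι : Type*} (s : Finset ι) (f : ι → ℂ) (u : ι → ℝ)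
    (hf : ∀ i ∈ s, ‖f i - 1‖ ≤ u i) (hu : ∀ i ∈ s, 0 ≤ u i) :
    ‖∏ i ∈ s, f i - 1‖ ≤ Real.exp (∑ i ∈ s, u i) - 1 := by
  induction s using Finset.cons_induction with
  | empty => simp
  | cons a s ha ih =>
    rw [Finset.prod_cons, Finset.sum_cons]
    have h1 : ‖∏ i ∈ s, f i - 1‖ ≤ Real.exp (∑ i ∈ s, u i) - 1 :=
      ih (fun i hi => hf i (Finset.mem_cons_of_mem hi)) (fun i hi => hu i (Finset.mem_cons_of_mem hi))
    have h2 : ‖f a - 1‖ ≤ u a := hf a (Finset.mem_cons_self a s)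
    have h3 : ‖∏ i ∈ s, f i‖ ≤ Real.exp (∑ i ∈ s, u i) := by
      calc ‖∏ i ∈ s, f i‖ ≤ ‖∏ i ∈ s, f i - 1‖ + ‖(1:ℂ)‖ := by
            simpa using norm_add_le (∏ i ∈ s, f i - 1) 1
        _ = ‖∏ i ∈ s, f i - 1‖ + 1 := by rw [norm_one]
        _ ≤ Real.exp (∑ i ∈ s, u i) := by linarith
    have key : f a * ∏ i ∈ s, f i - 1 = (∏ i ∈ s, f i - 1) + (f a - 1) * ∏ i ∈ s, f i := by ring
    rw [key]
    have h4 : ‖(∏ i ∈ s, f i - 1) + (f a - 1) * ∏ i ∈ s, f i‖ ≤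
        (Real.exp (∑ i ∈ s, u i) - 1) + u a * Real.exp (∑ i ∈ s, u i) := by
      refine (norm_add_le _ _).trans ?_
      gcongr
      · rw [norm_mul]
        exact mul_le_mul h2 h3 (norm_nonneg _) ((norm_nonneg _).trans h2)
    refine h4.trans ?_
    have h5 : u a + 1 ≤ Real.exp (u a) := Real.add_one_le_exp (u a)
    have h6 : (0:ℝ) < Real.exp (∑ i ∈ s, u i) := Real.exp_pos _
    rw [Real.exp_add]
    nlinarith

lemma norm_prod_le {ι : Type*} (s : Finset ι) (f : ι → ℂ) (u : ι → ℝ)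
    (hf : ∀ i ∈ s, ‖f i - 1‖ ≤ u i) (hu : ∀ i ∈ s, 0 ≤ u i) :
    ‖∏ i ∈ s, f i‖ ≤ Real.exp (∑ i ∈ s, u i) := by
  calc ‖∏ i ∈ s, f i‖ ≤ ‖∏ i ∈ s, f i - 1‖ + ‖(1:ℂ)‖ := by
        simpa using norm_add_le (∏ i ∈ s, f i - 1) 1
    _ = ‖∏ i ∈ s, f i - 1‖ + 1 := by rw [norm_one]
    _ ≤ Real.exp (∑ i ∈ s, u i) := by
        have := norm_prod_sub_one_le s f u hf hu; linarith

lemma uniformCauchy_prod {f : ℕ → ℂ → ℂ} {u : ℕ → ℝ} (hu : Summable u) (h0 : ∀ n, 0 ≤ u n)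
    {K : Set ℂ} (hf : ∀ n, ∀ z ∈ K, ‖f n z - 1‖ ≤ u n) :
    UniformCauchySeqOn (fun N z => ∏ n ∈ Finset.range N, f n z) atTop K := by
  rw [Metric.uniformCauchySeqOn_iff]
  intro ε hε
  set S := ∑' n, u n with hS
  have hS0 : 0 ≤ S := tsum_nonneg h0
  have htail : Tendsto (fun N => ∑' k, u (k + N)) atTop (𝓝 0) := by
    exact_mod_cast tendsto_sum_nat_add u
  have hcont : Tendsto (fun N => (Real.exp (∑' k, u (k + N)) - 1) * Real.exp S) atTop (𝓝 0) := by
    have : Tendsto (fun N => (Real.exp (∑' k, u (k + N)) - 1) * Real.exp S) atTop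
        (𝓝 ((Real.exp 0 - 1) * Real.exp S)) := by
      exact (((Real.continuous_exp.tendsto 0).comp htail).sub tendsto_const_nhds).mul
        tendsto_const_nhds
    simpa using this
  have hev : ∀ᶠ N in atTop, (Real.exp (∑' k, u (k + N)) - 1) * Real.exp S < ε := by
    have := hcont.eventually (eventually_lt_nhds hε)  -- maybe wrong lemma
    simpa using this
  obtain ⟨N₀, hN₀⟩ := eventually_atTop.mp hev
  refine ⟨N₀, fun m hm n hn z hz => ?_⟩
  -- wlog n ≤ m
  wlog hmn : n ≤ m generalizing m n
  · rw [dist_comm]; exact this n hn m hm (le_of_not_ge hmn)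
  have key : ∀ a b : ℕ, a ≤ b → N₀ ≤ a →
      dist (∏ i ∈ Finset.range b, f i z) (∏ i ∈ Finset.range a, f i z) < ε := by
    intro a b hab ha
    have hsplit : ∏ i ∈ Finset.range b, f i z =
        (∏ i ∈ Finset.range a, f i z) * ∏ i ∈ Finset.Ico a b, f i z := by
      rw [Finset.prod_range_mul_prod_Ico _ hab]
    rw [dist_eq_norm, hsplit]
    have : (∏ i ∈ Finset.range a, f i z) * ∏ i ∈ Finset.Ico a b, f i z -
        ∏ i ∈ Finset.range a, f i z =
        (∏ i ∈ Finset.range a, f i z) * (∏ i ∈ Finset.Ico a b, f i z - 1) := by ring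
    rw [this, norm_mul]
    have hb1 : ‖∏ i ∈ Finset.range a, f i z‖ ≤ Real.exp (∑ i ∈ Finset.range a, u i) :=
      norm_prod_le _ _ _ (fun i _ => hf i z hz) (fun i _ => h0 i)
    have hb2 : ‖∏ i ∈ Finset.Ico a b, f i z - 1‖ ≤ Real.exp (∑ i ∈ Finset.Ico a b, u i) - 1 :=
      norm_prod_sub_one_le _ _ _ (fun i _ => hf i z hz) (fun i _ => h0 i)
    have hs1 : ∑ i ∈ Finset.range a, u i ≤ S := Summable.sum_le_tsum _ (fun i _ => h0 i) hu
    have hs2 : ∑ i ∈ Finset.Ico a b, u i ≤ ∑' k, u (k + a) := by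
      rw [Finset.sum_Ico_eq_sum_range]
      have : ∀ i, u (a + i) = (fun k => u (k + a)) i := fun i => by rw [add_comm]
      simp_rw [this]
      exact Summable.sum_le_tsum _ (fun i _ => h0 _) (hu.comp_injective (add_left_injective a))
    calc ‖∏ i ∈ Finset.range a, f i z‖ * ‖∏ i ∈ Finset.Ico a b, f i z - 1‖
        ≤ Real.exp S * (Real.exp (∑' k, u (k + a)) - 1) := by
          apply mul_le_mul
          · exact hb1.trans (Real.exp_le_exp.mpr hs1)
          · exact hb2.trans (sub_le_sub_right (Real.exp_le_exp.mpr hs2) 1)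
          · exact norm_nonneg _
          · positivity
      _ < ε := by rw [mul_comm]; exact hN₀ a ha
  exact key n m hmn hn



section Plim

noncomputable def pprod (a : ℕ → ℂ) (v : ℂ → ℂ) (N : ℕ) (z : ℂ) : ℂ :=
  ∏ n ∈ Finset.range N, (1 + a n * v z)

noncomputable def plim (a : ℕ → ℂ) (v : ℂ → ℂ) (z : ℂ) : ℂ :=
  limUnder atTop (fun N => pprod a v N z)

variable {a : ℕ → ℂ} {v : ℂ → ℂ} {C r : ℝ}

lemma summable_bound (hC : 0 ≤ C) (hr0 : 0 ≤ r) (hr1 : r < 1)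
    (ha : ∀ n, ‖a n‖ ≤ C * r ^ n) {M : ℝ} (hM : 0 ≤ M) :
    Summable (fun n => C * M * r ^ n) :=
  (summable_geometric_of_lt_one hr0 hr1).mul_left _

lemma ucs_pprod (hC : 0 ≤ C) (hr0 : 0 ≤ r) (hr1 : r < 1)
    (ha : ∀ n, ‖a n‖ ≤ C * r ^ n) {K : Set ℂ} {M : ℝ} (hM : 0 ≤ M)
    (hK : ∀ z ∈ K, ‖v z‖ ≤ M) :
    UniformCauchySeqOn (pprod a v) atTop K := by
  apply uniformCauchy_prod (u := fun n => C * M * r ^ n)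
    (summable_bound hC hr0 hr1 ha hM)
    (fun n => by positivity)
  intro n z hz
  have : (1 + a n * v z) - 1 = a n * v z := by ring
  rw [this, norm_mul]
  calc ‖a n‖ * ‖v z‖ ≤ (C * r ^ n) * M :=
        mul_le_mul (ha n) (hK z hz) (norm_nonneg _) (by positivity)
    _ = C * M * r ^ n := by ring

lemma tendsto_pprod (hC : 0 ≤ C) (hr0 : 0 ≤ r) (hr1 : r < 1)
    (ha : ∀ n, ‖a n‖ ≤ C * r ^ n) (z : ℂ) :
    Filter.Tendsto (fun N => pprod a v N z) atTop (𝓝 (plim a v z)) := by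
  have hucs := ucs_pprod hC hr0 hr1 ha (K := {z}) (M := ‖v z‖) (norm_nonneg _)
    (fun w hw => by simp only [Set.mem_singleton_iff] at hw; subst hw; exact le_rfl)
  exact (hucs.cauchySeq rfl).tendsto_limUnder

lemma diff_pprod (hv : Differentiable ℂ v) (N : ℕ) : Differentiable ℂ (pprod a v N) := by
  induction N with
  | zero =>
    have : pprod a v 0 = fun _ => (1:ℂ) := by funext z; simp [pprod]
    rw [this]; exact differentiable_const _
  | succ n ih =>
    have : pprod a v (n+1) = fun z => pprod a v n z * (1 + a n * v z) := by
      funext z; rw [pprod, Finset.prod_range_succ]; rfl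
    rw [this]
    exact ih.mul ((differentiable_const _).add ((differentiable_const _).mul hv))

lemma diff_plim (hC : 0 ≤ C) (hr0 : 0 ≤ r) (hr1 : r < 1)
    (ha : ∀ n, ‖a n‖ ≤ C * r ^ n) (hv : Differentiable ℂ v) :
    Differentiable ℂ (plim a v) := by
  rw [← differentiableOn_univ]
  have tlu : TendstoLocallyUniformlyOn (pprod a v) (plim a v) atTop Set.univ := by
    rw [tendstoLocallyUniformlyOn_iff_forall_isCompact isOpen_univ]
    intro K _ hK
    obtain ⟨M, hM⟩ := hK.exists_bound_of_continuousOn hv.continuous.continuousOn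
    have hM' : ∀ z ∈ K, ‖v z‖ ≤ max M 0 := fun z hz => (hM z hz).trans (le_max_left _ _)
    exact (ucs_pprod hC hr0 hr1 ha (le_max_right _ _) hM').tendstoUniformlyOn_of_tendsto
      (fun z _ => tendsto_pprod hC hr0 hr1 ha z)
  exact tlu.differentiableOn
    (Filter.Eventually.of_forall fun N => (diff_pprod hv N).differentiableOn) isOpen_univ

lemma plim_ne_zero (hC : 0 ≤ C) (hr0 : 0 ≤ r) (hr1 : r < 1)
    (ha : ∀ n, ‖a n‖ ≤ C * r ^ n) {z : ℂ} (hnz : ∀ n, 1 + a n * v z ≠ 0) :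
    plim a v z ≠ 0 := by
  set u : ℕ → ℝ := fun n => ‖a n‖ * ‖v z‖ with hu_def
  have hu : Summable u := by
    apply Summable.of_nonneg_of_le (fun n => by positivity)
      (fun n => mul_le_mul_of_nonneg_right (ha n) (norm_nonneg _))
    exact ((summable_geometric_of_lt_one hr0 hr1).mul_left _).mul_right _
  have h0 : ∀ n, 0 ≤ u n := fun n => by positivity
  have htail : Filter.Tendsto (fun N => ∑' k, u (k + N)) atTop (𝓝 0) := tendsto_sum_nat_add u
  have hev : ∀ᶠ N in atTop, ∑' k, u (k + N) < 1/2 :=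
    htail.eventually (eventually_lt_nhds one_half_pos)
  obtain ⟨N₁, hN₁⟩ := Filter.eventually_atTop.mp hev
  have htail₁ : ∑' k, u (k + N₁) < 1/2 := hN₁ N₁ le_rfl
  have hPne : pprod a v N₁ z ≠ 0 := Finset.prod_ne_zero_iff.mpr (fun n _ => hnz n)
  set L := plim a v z with hL
  have hPL : Filter.Tendsto (fun N => pprod a v N z) atTop (𝓝 L) := tendsto_pprod hC hr0 hr1 ha z
  set Q : ℕ → ℂ := fun M => ∏ k ∈ Finset.range M, (1 + a (N₁ + k) * v z) with hQ_def
  have hsplit : ∀ M, pprod a v (N₁ + M) z = pprod a v N₁ z * Q M := by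
    intro M; rw [pprod, Finset.prod_range_add]; rfl
  have hPQ : Filter.Tendsto (fun M => pprod a v (N₁ + M) z) atTop (𝓝 L) := by
    have := hPL.comp (tendsto_add_atTop_nat N₁)
    simpa [Function.comp_def, Nat.add_comm] using this
  have hQtendsto : Filter.Tendsto Q atTop (𝓝 (L * (pprod a v N₁ z)⁻¹)) := by
    have : Q = fun M => pprod a v (N₁ + M) z * (pprod a v N₁ z)⁻¹ := by
      funext M; rw [hsplit M]; field_simp
    rw [this]
    exact hPQ.mul_const _
  set T := L * (pprod a v N₁ z)⁻¹ with hT_def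
  have hQbound : ∀ M, ‖Q M - 1‖ ≤ Real.exp (1/2) - 1 := by
    intro M
    have h1 : ‖Q M - 1‖ ≤ Real.exp (∑ k ∈ Finset.range M, u (N₁ + k)) - 1 := by
      apply norm_prod_sub_one_le
      · intro i _
        have : (1 + a (N₁ + i) * v z) - 1 = a (N₁ + i) * v z := by ring
        rw [this, norm_mul]
      · intro i _; positivity
    refine h1.trans ?_
    have h2 : ∑ k ∈ Finset.range M, u (N₁ + k) ≤ ∑' k, u (k + N₁) := by
      have : ∀ k, u (N₁ + k) = (fun j => u (j + N₁)) k := fun k => by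
        simp only; rw [Nat.add_comm]
      simp_rw [this]
      exact Summable.sum_le_tsum _ (fun i _ => h0 _) (hu.comp_injective (add_left_injective N₁))
    exact sub_le_sub_right (Real.exp_le_exp.mpr (h2.trans htail₁.le)) 1
  have hTbound : ‖T - 1‖ ≤ Real.exp (1/2) - 1 :=
    le_of_tendsto ((hQtendsto.sub_const 1).norm) (Filter.Eventually.of_forall hQbound)
  have hexp : Real.exp (1/2) < 2 := by
    have h1 : Real.exp (1/2) * Real.exp (1/2) = Real.exp 1 := by
      rw [← Real.exp_add]; norm_num
    have h2 := Real.exp_one_lt_d9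
    nlinarith [Real.exp_pos (1/2 : ℝ)]
  have hTne : T ≠ 0 := by
    intro h
    rw [h] at hTbound
    simp at hTbound
    linarith
  have : L = pprod a v N₁ z * T := by rw [hT_def]; field_simp
  rw [this]
  exact mul_ne_zero hPne hTne

lemma plim_shift (hC : 0 ≤ C) (hr0 : 0 ≤ r) (hr1 : r < 1)
    (ha : ∀ n, ‖a n‖ ≤ C * r ^ n) (z : ℂ) :
    plim a v z = (1 + a 0 * v z) * plim (fun n => a (n+1)) v z := by
  have ha' : ∀ n, ‖a (n+1)‖ ≤ C * r ^ n := fun n =>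
    (ha (n+1)).trans (mul_le_mul_of_nonneg_left
      (pow_le_pow_of_le_one hr0 hr1.le (Nat.le_succ n)) hC)
  have h1 : Filter.Tendsto (fun N => pprod a v (N + 1) z) atTop (𝓝 (plim a v z)) :=
    (tendsto_pprod hC hr0 hr1 ha z).comp (tendsto_add_atTop_nat 1)
  have h2 : ∀ N, pprod a v (N + 1) z =
      (1 + a 0 * v z) * pprod (fun n => a (n+1)) v N z := by
    intro N
    rw [pprod, Finset.prod_range_succ', pprod, mul_comm]
  simp_rw [h2] at h1
  have h3 : Filter.Tendsto (fun N => (1 + a 0 * v z) * pprod (fun n => a (n+1)) v N z) atTop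
      (𝓝 ((1 + a 0 * v z) * plim (fun n => a (n+1)) v z)) :=
    (tendsto_pprod hC hr0 hr1 ha' z).const_mul _
  exact tendsto_nhds_unique h1 h3

end Plim


section Theta

noncomputable def thQ (τ : ℂ) : ℂ := cexp (π * I * τ)
noncomputable def thE (z : ℂ) : ℂ := cexp (2 * π * I * z)
noncomputable def thEneg (z : ℂ) : ℂ := cexp (-(2 * π * I * z))
noncomputable def thA (τ : ℂ) (n : ℕ) : ℂ := thQ τ ^ (2*n+1)
noncomputable def thGA (τ : ℂ) : ℂ → ℂ := plim (thA τ) thE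
noncomputable def thGB (τ : ℂ) : ℂ → ℂ := plim (thA τ) thEneg
noncomputable def thR1 (τ : ℂ) : ℂ → ℂ := plim (fun n => thA τ (n+1)) thEneg
noncomputable def thG (τ : ℂ) (z : ℂ) : ℂ := thGA τ z * thGB τ z
noncomputable def thZ (τ : ℂ) : ℂ := (1 + τ)/2

variable {τ : ℂ}

lemma thQ_ne (τ : ℂ) : thQ τ ≠ 0 := Complex.exp_ne_zero _

lemma thE_ne (z : ℂ) : thE z ≠ 0 := Complex.exp_ne_zero _

lemma thEneg_ne (z : ℂ) : thEneg z ≠ 0 := Complex.exp_ne_zero _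

lemma thE_mul_thEneg (z : ℂ) : thE z * thEneg z = 1 := by
  rw [thE, thEneg, ← Complex.exp_add]; simp

lemma norm_thQ (hτ : 0 < τ.im) : ‖thQ τ‖ = Real.exp (-(π * τ.im)) := by
  rw [thQ, Complex.norm_exp]
  congr 1
  simp [Complex.mul_re, Complex.mul_im]

lemma norm_thQ_lt (hτ : 0 < τ.im) : ‖thQ τ‖ < 1 := by
  rw [norm_thQ hτ]
  apply Real.exp_lt_one_iff.mpr
  have := Real.pi_pos
  nlinarith

lemma norm_thQ_nonneg : 0 ≤ ‖thQ τ‖ := norm_nonneg _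

lemma thA_bound (hτ : 0 < τ.im) : ∀ n, ‖thA τ n‖ ≤ ‖thQ τ‖ * ‖thQ τ‖ ^ n := by
  intro n
  rw [thA, norm_pow]
  calc ‖thQ τ‖ ^ (2*n+1) ≤ ‖thQ τ‖ ^ (n+1) :=
        pow_le_pow_of_le_one (norm_nonneg _) (norm_thQ_lt hτ).le (by omega)
    _ = ‖thQ τ‖ * ‖thQ τ‖ ^ n := by rw [pow_succ]; ring

lemma thA_shift_bound (hτ : 0 < τ.im) : ∀ n, ‖thA τ (n+1)‖ ≤ ‖thQ τ‖ * ‖thQ τ‖ ^ n := fun n =>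
  (thA_bound hτ (n+1)).trans (mul_le_mul_of_nonneg_left
    (pow_le_pow_of_le_one (norm_nonneg _) (norm_thQ_lt hτ).le (Nat.le_succ n)) (norm_nonneg _))

lemma diff_thE : Differentiable ℂ thE :=
  ((differentiable_const _).mul differentiable_id).cexp

lemma diff_thEneg : Differentiable ℂ thEneg :=
  (((differentiable_const _).mul differentiable_id).neg).cexp

lemma diff_thGA (hτ : 0 < τ.im) : Differentiable ℂ (thGA τ) :=
  diff_plim (norm_nonneg _) (norm_nonneg _) (norm_thQ_lt hτ) (thA_bound hτ) diff_thE

lemma diff_thGB (hτ : 0 < τ.im) : Differentiable ℂ (thGB τ) :=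
  diff_plim (norm_nonneg _) (norm_nonneg _) (norm_thQ_lt hτ) (thA_bound hτ) diff_thEneg

lemma diff_thR1 (hτ : 0 < τ.im) : Differentiable ℂ (thR1 τ) :=
  diff_plim (norm_nonneg _) (norm_nonneg _) (norm_thQ_lt hτ) (thA_shift_bound hτ) diff_thEneg

lemma diff_thG (hτ : 0 < τ.im) : Differentiable ℂ (thG τ) :=
  (diff_thGA hτ).mul (diff_thGB hτ)

lemma thE_add_one (z : ℂ) : thE (z + 1) = thE z := by
  rw [thE, thE, mul_add, Complex.exp_add, mul_one, exp_two_pi_mul_I, mul_one]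

lemma thEneg_add_one (z : ℂ) : thEneg (z + 1) = thEneg z := by
  rw [thEneg, thEneg, mul_add, neg_add, Complex.exp_add, mul_one]
  rw [show -(2*(π:ℂ)*I) = (((-1 : ℤ)) : ℂ) * (2*π*I) by push_cast; ring]
  rw [exp_int_mul_two_pi_mul_I, mul_one]

lemma thE_add_tau (z : ℂ) : thE (z + τ) = thQ τ ^ 2 * thE z := by
  rw [thE, thE, mul_add, Complex.exp_add, thQ, ← Complex.exp_nat_mul]
  rw [show ((2:ℕ):ℂ) * (π * I * τ) = 2 * π * I * τ by push_cast; ring]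
  ring

lemma thEneg_add_tau (z : ℂ) : thEneg (z + τ) * thQ τ ^ 2 = thEneg z := by
  rw [thEneg, thEneg, thQ, ← Complex.exp_nat_mul, ← Complex.exp_add]
  congr 1
  push_cast
  ring

lemma plim_congr {a : ℕ → ℂ} {v : ℂ → ℂ} {z w : ℂ} (h : v z = v w) :
    plim a v z = plim a v w := by
  unfold plim pprod
  congr 1
  funext N
  exact Finset.prod_congr rfl fun n _ => by rw [h]

lemma pprod_congr {a b : ℕ → ℂ} {v w : ℂ → ℂ} {z y : ℂ} (h : ∀ n, a n * v z = b n * w y) (N : ℕ) :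
    pprod a v N z = pprod b w N y :=
  Finset.prod_congr rfl fun n _ => by rw [h n]

lemma thGA_add_one (z : ℂ) : thGA τ (z + 1) = thGA τ z := plim_congr (thE_add_one z)

lemma thGB_add_one (z : ℂ) : thGB τ (z + 1) = thGB τ z := plim_congr (thEneg_add_one z)

lemma thG_add_one (z : ℂ) : thG τ (z + 1) = thG τ z := by
  rw [thG, thG, thGA_add_one, thGB_add_one]

lemma thGA_add_tau (hτ : 0 < τ.im) (z : ℂ) :
    thGA τ (z + τ) * (1 + thQ τ * thE z) = thGA τ z := by
  have h1 : ∀ N, pprod (thA τ) thE N (z + τ) = pprod (fun n => thA τ (n+1)) thE N z := by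
    intro N
    apply pprod_congr
    intro n
    rw [thE_add_tau, thA, thA]
    ring
  have h2 : ∀ N, pprod (thA τ) thE (N+1) z =
      pprod (fun n => thA τ (n+1)) thE N z * (1 + thA τ 0 * thE z) := by
    intro N
    rw [pprod, Finset.prod_range_succ', pprod]
  have h3 : Filter.Tendsto (fun N => pprod (fun n => thA τ (n+1)) thE N z) atTop
      (𝓝 (thGA τ (z + τ))) := by
    have := tendsto_pprod (v := thE) (norm_nonneg (thQ τ)) (norm_nonneg _) (norm_thQ_lt hτ)
      (thA_bound hτ) (z + τ)
    simp_rw [h1] at this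
    exact this
  have h4 : Filter.Tendsto (fun N => pprod (thA τ) thE (N+1) z) atTop (𝓝 (thGA τ z)) :=
    (tendsto_pprod (v := thE) (norm_nonneg (thQ τ)) (norm_nonneg _) (norm_thQ_lt hτ)
      (thA_bound hτ) z).comp (tendsto_add_atTop_nat 1)
  simp_rw [h2] at h4
  have h5 : Filter.Tendsto (fun N => pprod (fun n => thA τ (n+1)) thE N z * (1 + thA τ 0 * thE z))
      atTop (𝓝 (thGA τ (z + τ) * (1 + thA τ 0 * thE z))) := h3.mul_const _
  have := tendsto_nhds_unique h4 h5
  rw [this]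
  norm_num [thA]

lemma thGB_add_tau (hτ : 0 < τ.im) (z : ℂ) :
    thGB τ (z + τ) = (1 + (thQ τ)⁻¹ * thEneg z) * thGB τ z := by
  set b : ℕ → ℂ := fun n => (thQ τ ^ 2) ^ n * (thQ τ)⁻¹ with hb
  have hcongr1 : ∀ N, pprod b thEneg N z = pprod (thA τ) thEneg N (z + τ) := by
    intro N
    apply pprod_congr
    intro n
    rw [thA, hb, ← thEneg_add_tau (τ := τ) z]
    field_simp [thQ_ne τ]
    ring
  have hcongr2 : ∀ N, pprod (fun n => b (n+1)) thEneg N z = pprod (thA τ) thEneg N z := by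
    intro N
    apply pprod_congr
    intro n
    rw [hb, thA]
    field_simp [thQ_ne τ]
    ring
  have key : ∀ N, pprod (thA τ) thEneg N (z + τ) * (1 + b N * thEneg z) =
      pprod (thA τ) thEneg N z * (1 + b 0 * thEneg z) := by
    intro N
    have e1 : pprod b thEneg (N+1) z = pprod (thA τ) thEneg N (z + τ) * (1 + b N * thEneg z) := by
      rw [pprod, Finset.prod_range_succ, ← pprod, hcongr1]
    have e2 : pprod b thEneg (N+1) z = pprod (thA τ) thEneg N z * (1 + b 0 * thEneg z) := by
      rw [pprod, Finset.prod_range_succ', ← pprod, hcongr2]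
    rw [← e1, e2]
  have hqsq : ‖thQ τ ^ 2‖ < 1 := by
    rw [norm_pow]
    exact pow_lt_one₀ (norm_nonneg _) (norm_thQ_lt hτ) two_ne_zero
  have hb0 : Filter.Tendsto (fun N => (1 : ℂ) + b N * thEneg z) atTop (𝓝 1) := by
    have h1 : Filter.Tendsto (fun N => (thQ τ ^ 2) ^ N) atTop (𝓝 0) :=
      tendsto_pow_atTop_nhds_zero_of_norm_lt_one hqsq
    have h2 : Filter.Tendsto (fun N => b N * thEneg z) atTop (𝓝 0) := by
      have := (h1.mul_const ((thQ τ)⁻¹ * thEneg z))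
      simpa [hb, mul_assoc] using this
    simpa using (tendsto_const_nhds (x := (1:ℂ))).add h2
  have hL : Filter.Tendsto (fun N => pprod (thA τ) thEneg N (z + τ) * (1 + b N * thEneg z)) atTop
      (𝓝 (thGB τ (z + τ) * 1)) :=
    (tendsto_pprod (v := thEneg) (norm_nonneg (thQ τ)) (norm_nonneg _) (norm_thQ_lt hτ)
      (thA_bound hτ) (z + τ)).mul hb0
  have hR : Filter.Tendsto (fun N => pprod (thA τ) thEneg N z * (1 + b 0 * thEneg z)) atTop
      (𝓝 (thGB τ z * (1 + b 0 * thEneg z))) :=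
    (tendsto_pprod (v := thEneg) (norm_nonneg (thQ τ)) (norm_nonneg _) (norm_thQ_lt hτ)
      (thA_bound hτ) z).mul_const _
  simp_rw [key] at hL
  have := tendsto_nhds_unique hL hR
  rw [mul_one] at this
  rw [this, hb]
  norm_num
  ring

lemma two_pi_I_ne : (2 * (π:ℂ) * I) ≠ 0 := by
  simp [Real.pi_ne_zero, Complex.I_ne_zero]

lemma thG_add_tau (hτ : 0 < τ.im) (z : ℂ) :
    thG τ (z + τ) = (thQ τ)⁻¹ * thEneg z * thG τ z := by
  have key : ∀ w, thG τ (w + τ) * (1 + thQ τ * thE w) =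
      (thQ τ)⁻¹ * thEneg w * thG τ w * (1 + thQ τ * thE w) := by
    intro w
    have h1 := thGA_add_tau hτ w
    have h2 := thGB_add_tau hτ w
    have h3 : (1 : ℂ) + (thQ τ)⁻¹ * thEneg w =
        (thQ τ)⁻¹ * thEneg w * (1 + thQ τ * thE w) := by
      have h4 : (thQ τ)⁻¹ * thEneg w * (thQ τ * thE w) = 1 := by
        have h5 := thE_mul_thEneg w
        have h6 := inv_mul_cancel₀ (thQ_ne τ)
        calc (thQ τ)⁻¹ * thEneg w * (thQ τ * thE w)
            = ((thQ τ)⁻¹ * thQ τ) * (thE w * thEneg w) := by ring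
          _ = 1 := by rw [h5, h6, one_mul]
      calc (1 : ℂ) + (thQ τ)⁻¹ * thEneg w
          = (thQ τ)⁻¹ * thEneg w * (thQ τ * thE w) + (thQ τ)⁻¹ * thEneg w := by rw [h4]
        _ = (thQ τ)⁻¹ * thEneg w * (1 + thQ τ * thE w) := by ring
    rw [thG, thG]
    calc thGA τ (w + τ) * thGB τ (w + τ) * (1 + thQ τ * thE w)
        = (thGA τ (w + τ) * (1 + thQ τ * thE w)) * thGB τ (w + τ) := by ring
      _ = thGA τ w * ((1 + (thQ τ)⁻¹ * thEneg w) * thGB τ w) := by rw [h1, h2]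
      _ = thGA τ w * (((thQ τ)⁻¹ * thEneg w * (1 + thQ τ * thE w)) * thGB τ w) := by rw [← h3]
      _ = (thQ τ)⁻¹ * thEneg w * (thGA τ w * thGB τ w) * (1 + thQ τ * thE w) := by ring
  set SS : Set ℂ := {w | 1 + thQ τ * thE w = 0} with hSS
  have hsub : SS ⊆ Set.range (fun k : ℤ => ((1:ℂ) - τ)/2 + k) := by
    intro w hw
    rw [hSS, Set.mem_setOf_eq] at hw
    have h6 : cexp (π * I * τ + 2 * π * I * w) = cexp (π * I) := by
      rw [Complex.exp_add, exp_pi_mul_I, ← thQ, ← thE]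
      linear_combination hw
    obtain ⟨k, hk⟩ := Complex.exp_eq_exp_iff_exists_int.mp h6
    refine ⟨k, ?_⟩
    apply mul_left_cancel₀ two_pi_I_ne
    linear_combination -hk
  have hcount : SS.Countable := (Set.countable_range _).mono hsub
  have hdense : Dense SSᶜ := hcount.dense_compl ℂ
  have hc1 : Continuous (fun w => thG τ (w + τ)) :=
    (diff_thG hτ).continuous.comp (continuous_id.add continuous_const)
  have hc2 : Continuous (fun w => (thQ τ)⁻¹ * thEneg w * thG τ w) :=
    ((continuous_const.mul diff_thEneg.continuous).mul (diff_thG hτ).continuous)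
  have : ∀ w ∈ SSᶜ, thG τ (w + τ) = (thQ τ)⁻¹ * thEneg w * thG τ w := by
    intro w hw
    rw [Set.mem_compl_iff, hSS, Set.mem_setOf_eq] at hw
    exact mul_right_cancel₀ hw (key w)
  exact congrFun (Continuous.ext_on hdense hc1 hc2 this) z

lemma thE_thZ : thE (thZ τ) = -thQ τ := by
  rw [thE, thZ, thQ, show 2*(π:ℂ)*I*((1+τ)/2) = π*I + π*I*τ by ring, Complex.exp_add,
    exp_pi_mul_I]
  ring

lemma thEneg_eq_inv (z : ℂ) : thEneg z = (thE z)⁻¹ := by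
  rw [thEneg, thE, Complex.exp_neg]

lemma thEneg_thZ : thEneg (thZ τ) = -(thQ τ)⁻¹ := by
  rw [thEneg_eq_inv, thE_thZ, inv_neg]

lemma one_sub_thQ_pow_ne (hτ : 0 < τ.im) {m : ℕ} (hm : 1 ≤ m) : (1:ℂ) - thQ τ ^ m ≠ 0 := by
  intro h
  have h1 : thQ τ ^ m = 1 := by linear_combination -h
  have h2 : ‖thQ τ ^ m‖ < 1 := by
    rw [norm_pow]
    exact pow_lt_one₀ (norm_nonneg _) (norm_thQ_lt hτ) (by omega)
  rw [h1] at h2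
  simp at h2

lemma thGA_thZ_ne (hτ : 0 < τ.im) : thGA τ (thZ τ) ≠ 0 := by
  apply plim_ne_zero (norm_nonneg (thQ τ)) (norm_nonneg _) (norm_thQ_lt hτ) (thA_bound hτ)
  intro n
  have : (1:ℂ) + thA τ n * thE (thZ τ) = 1 - thQ τ ^ (2*n+2) := by
    rw [thE_thZ, thA]
    ring
  rw [this]
  exact one_sub_thQ_pow_ne hτ (by omega)

lemma thR1_thZ_ne (hτ : 0 < τ.im) : thR1 τ (thZ τ) ≠ 0 := by
  apply plim_ne_zero (norm_nonneg (thQ τ)) (norm_nonneg _) (norm_thQ_lt hτ) (thA_shift_bound hτ)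
  intro n
  have : (1:ℂ) + thA τ (n+1) * thEneg (thZ τ) = 1 - thQ τ ^ (2*n+2) := by
    rw [thEneg_thZ, thA]
    field_simp [thQ_ne τ]
    ring
  rw [this]
  exact one_sub_thQ_pow_ne hτ (by omega)

lemma thGB_split (hτ : 0 < τ.im) (z : ℂ) :
    thGB τ z = (1 + thQ τ * thEneg z) * thR1 τ z := by
  have := plim_shift (a := thA τ) (v := thEneg) (norm_nonneg (thQ τ)) (norm_nonneg _)
    (norm_thQ_lt hτ) (thA_bound hτ) z
  rw [thGB, this, thR1, thA, pow_one]

lemma thGB_thZ (hτ : 0 < τ.im) : thGB τ (thZ τ) = 0 := by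
  rw [thGB_split hτ, thEneg_thZ]
  field_simp [thQ_ne τ]
  simp

lemma thG_thZ (hτ : 0 < τ.im) : thG τ (thZ τ) = 0 := by
  rw [thG, thGB_thZ hτ, mul_zero]

lemma hasDeriv_thEneg (z : ℂ) : HasDerivAt thEneg (-(2*π*I) * thEneg z) z := by
  have h : HasDerivAt (fun w : ℂ => -(2*π*I*w)) (-(2*π*I)) z := by
    simpa using ((hasDerivAt_id z).const_mul (-(2*(π:ℂ)*I)))
  convert h.cexp using 1
  · rfl
  · rfl
  rw [thEneg]
  ring

lemma hasDeriv_thE (z : ℂ) : HasDerivAt thE (2*π*I * thE z) z := by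
  have h : HasDerivAt (fun w : ℂ => 2*π*I*w) (2*π*I) z := by
    simpa using ((hasDerivAt_id z).const_mul (2*(π:ℂ)*I))
  convert h.cexp using 1
  · rfl
  · rfl
  rw [thE]
  ring

lemma deriv_thG_thZ_ne (hτ : 0 < τ.im) : deriv (thG τ) (thZ τ) ≠ 0 := by
  have hg : HasDerivAt (fun z => 1 + thQ τ * thEneg z) (thQ τ * (-(2*π*I) * thEneg (thZ τ)))
      (thZ τ) := ((hasDeriv_thEneg (thZ τ)).const_mul (thQ τ)).const_add 1
  have hR : HasDerivAt (thR1 τ) (deriv (thR1 τ) (thZ τ)) (thZ τ) :=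
    ((diff_thR1 hτ) (thZ τ)).hasDerivAt
  have hGB : HasDerivAt (thGB τ)
      (thQ τ * (-(2*π*I) * thEneg (thZ τ)) * thR1 τ (thZ τ) +
        (1 + thQ τ * thEneg (thZ τ)) * deriv (thR1 τ) (thZ τ)) (thZ τ) := by
    have := hg.mul hR
    apply this.congr_of_eventuallyEq
    exact Filter.Eventually.of_forall fun w => (thGB_split hτ w)
  have hGBval : deriv (thGB τ) (thZ τ) = 2*π*I * thR1 τ (thZ τ) := by
    rw [hGB.deriv, thEneg_thZ]
    field_simp [thQ_ne τ]
    try ring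
  have hGA : HasDerivAt (thGA τ) (deriv (thGA τ) (thZ τ)) (thZ τ) :=
    ((diff_thGA hτ) (thZ τ)).hasDerivAt
  have hGB' : HasDerivAt (thGB τ) (deriv (thGB τ) (thZ τ)) (thZ τ) :=
    ((diff_thGB hτ) (thZ τ)).hasDerivAt
  have hG : HasDerivAt (thG τ)
      (deriv (thGA τ) (thZ τ) * thGB τ (thZ τ) + thGA τ (thZ τ) * deriv (thGB τ) (thZ τ))
      (thZ τ) := hGA.mul hGB'
  rw [hG.deriv, thGB_thZ hτ, hGBval, mul_zero, zero_add]
  exact mul_ne_zero (thGA_thZ_ne hτ)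
    (mul_ne_zero two_pi_I_ne (thR1_thZ_ne hτ))

lemma prop_shift {P : ℂ → Prop} {c : ℂ} (h : ∀ z, P z ↔ P (z + c)) :
    ∀ (k : ℤ) (z : ℂ), P z → P (z + k * c) := by
  intro k
  induction k using Int.induction_on with
  | zero => intro z hz; simpa using hz
  | succ n ih =>
    intro z hz
    have e : z + (((n : ℤ) + 1 : ℤ) : ℂ) * c = (z + ((n : ℤ) : ℂ) * c) + c := by push_cast; ring
    rw [e]
    exact (h _).mp (ih z hz)
  | pred n ih =>
    intro z hz
    have e : (z + ((-(n : ℤ) - 1 : ℤ) : ℂ) * c) + c = z + ((-(n : ℤ) : ℤ) : ℂ) * c := by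
      push_cast; ring
    exact (h _).mpr (by rw [e]; exact ih z hz)

lemma prop_lat {P : ℂ → Prop} (h1 : ∀ z, P z ↔ P (z + 1)) (hτp : ∀ z, P z ↔ P (z + τ))
    (z : ℂ) (hz : P z) (m n : ℤ) : P (z + m + n * τ) := by
  have b1 : P (z + (m : ℂ)) := by
    have := prop_shift h1 m z hz
    simpa using this
  exact prop_shift hτp n (z + (m : ℂ)) b1

lemma deriv_thG_add_one (z : ℂ) : deriv (thG τ) (z + 1) = deriv (thG τ) z := by
  have e : (fun x => thG τ (x + 1)) = thG τ := funext thG_add_one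
  calc deriv (thG τ) (z + 1) = deriv (fun x => thG τ (x + 1)) z := (deriv_comp_add_const _ _ _).symm
    _ = deriv (thG τ) z := by rw [e]

lemma thG_simple_iff_one (z : ℂ) :
    (thG τ z = 0 ∧ deriv (thG τ) z ≠ 0) ↔ (thG τ (z+1) = 0 ∧ deriv (thG τ) (z+1) ≠ 0) := by
  rw [thG_add_one, deriv_thG_add_one]

lemma cfac_ne (z : ℂ) : (thQ τ)⁻¹ * thEneg z ≠ 0 :=
  mul_ne_zero (inv_ne_zero (thQ_ne τ)) (thEneg_ne z)

lemma deriv_thG_add_tau (hτ : 0 < τ.im) (z : ℂ) (hz : thG τ z = 0) :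
    deriv (thG τ) (z + τ) = (thQ τ)⁻¹ * thEneg z * deriv (thG τ) z := by
  have e : (fun x => thG τ (x + τ)) = fun x => (thQ τ)⁻¹ * thEneg x * thG τ x :=
    funext (thG_add_tau hτ)
  have hd : HasDerivAt (fun x => (thQ τ)⁻¹ * thEneg x * thG τ x)
      ((thQ τ)⁻¹ * (-(2*π*I) * thEneg z) * thG τ z +
        ((thQ τ)⁻¹ * thEneg z) * deriv (thG τ) z) z :=
    ((hasDeriv_thEneg z).const_mul ((thQ τ)⁻¹)).mul ((diff_thG hτ z).hasDerivAt)
  calc deriv (thG τ) (z + τ) = deriv (fun x => thG τ (x + τ)) z :=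
        (deriv_comp_add_const _ _ _).symm
    _ = (thQ τ)⁻¹ * (-(2*π*I) * thEneg z) * thG τ z +
        ((thQ τ)⁻¹ * thEneg z) * deriv (thG τ) z := by rw [e, hd.deriv]
    _ = (thQ τ)⁻¹ * thEneg z * deriv (thG τ) z := by rw [hz]; ring

lemma thG_simple_iff_tau (hτ : 0 < τ.im) (z : ℂ) :
    (thG τ z = 0 ∧ deriv (thG τ) z ≠ 0) ↔ (thG τ (z+τ) = 0 ∧ deriv (thG τ) (z+τ) ≠ 0) := by
  constructor
  · rintro ⟨h0, hd⟩
    refine ⟨by rw [thG_add_tau hτ, h0, mul_zero], ?_⟩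
    rw [deriv_thG_add_tau hτ z h0]
    exact mul_ne_zero (cfac_ne z) hd
  · rintro ⟨h0, hd⟩
    have hz0 : thG τ z = 0 := by
      rw [thG_add_tau hτ] at h0
      rcases mul_eq_zero.mp h0 with h | h
      · exact absurd h (cfac_ne z)
      · exact h
    refine ⟨hz0, ?_⟩
    intro hcontra
    rw [deriv_thG_add_tau hτ z hz0, hcontra, mul_zero] at hd
    exact hd rfl

lemma thG_lat (hτ : 0 < τ.im) (m n : ℤ) :
    thG τ (thZ τ + m + n * τ) = 0 ∧ deriv (thG τ) (thZ τ + m + n * τ) ≠ 0 :=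
  prop_lat (fun z => thG_simple_iff_one z) (fun z => thG_simple_iff_tau hτ z) (thZ τ)
    ⟨thG_thZ hτ, deriv_thG_thZ_ne hτ⟩ m n

lemma thG_zero_lat (hτ : 0 < τ.im) (z : ℂ) (hz : thG τ z = 0) :
    ∃ m n : ℤ, z = thZ τ + m + n * τ := by
  rw [thG] at hz
  rcases mul_eq_zero.mp hz with h | h
  · -- GA z = 0 : some factor 1 + thA n * thE z = 0
    have : ¬ (∀ n, (1:ℂ) + thA τ n * thE z ≠ 0) := by
      intro hall
      exact plim_ne_zero (norm_nonneg (thQ τ)) (norm_nonneg _) (norm_thQ_lt hτ)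
        (thA_bound hτ) hall h
    push_neg at this
    obtain ⟨n, hn⟩ := this
    have h6 : cexp ((((2*n+1 : ℕ)) : ℂ) * (π * I * τ) + 2 * π * I * z) = cexp (π * I) := by
      rw [Complex.exp_add, Complex.exp_nat_mul, ← thQ, ← thE, exp_pi_mul_I]
      rw [thA] at hn
      linear_combination hn
    obtain ⟨k, hk⟩ := Complex.exp_eq_exp_iff_exists_int.mp h6
    refine ⟨k, -((n:ℤ)+1), ?_⟩
    apply mul_left_cancel₀ two_pi_I_ne
    rw [thZ]
    push_cast at hk ⊢
    linear_combination hk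
  · have : ¬ (∀ n, (1:ℂ) + thA τ n * thEneg z ≠ 0) := by
      intro hall
      exact plim_ne_zero (norm_nonneg (thQ τ)) (norm_nonneg _) (norm_thQ_lt hτ)
        (thA_bound hτ) hall h
    push_neg at this
    obtain ⟨n, hn⟩ := this
    have h6 : cexp ((((2*n+1 : ℕ)) : ℂ) * (π * I * τ) + -(2 * π * I * z)) = cexp (π * I) := by
      rw [Complex.exp_add, Complex.exp_nat_mul, ← thQ, ← thEneg, exp_pi_mul_I]
      rw [thA] at hn
      linear_combination hn
    obtain ⟨k, hk⟩ := Complex.exp_eq_exp_iff_exists_int.mp h6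
    refine ⟨-1-k, (n:ℤ), ?_⟩
    apply mul_left_cancel₀ two_pi_I_ne
    rw [thZ]
    push_cast at hk ⊢
    linear_combination -hk

lemma cexp_quasi (z : ℂ) : cexp (-π * I * (τ + 2 * z)) = (thQ τ)⁻¹ * thEneg z := by
  rw [thQ, thEneg, ← Complex.exp_neg, ← Complex.exp_add]
  congr 1
  ring

lemma thF_add_tau (z : ℂ) :
    jacobiTheta₂ (z + τ) τ = (thQ τ)⁻¹ * thEneg z * jacobiTheta₂ z τ := by
  rw [jacobiTheta₂_add_left', cexp_quasi]

lemma thF_thZ (hτ : 0 < τ.im) : jacobiTheta₂ (thZ τ) τ = 0 := by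
  have h1 : jacobiTheta₂ (thZ τ) τ =
      cexp (-π * I * (τ + 2 * (thZ τ - τ))) * jacobiTheta₂ (thZ τ - τ) τ := by
    have := jacobiTheta₂_add_left' (thZ τ - τ) τ
    rw [show thZ τ - τ + τ = thZ τ by ring] at this
    exact this
  have h2 : cexp (-π * I * (τ + 2 * (thZ τ - τ))) = -1 := by
    rw [show -(π:ℂ) * I * (τ + 2 * (thZ τ - τ)) = -(π * I) by rw [thZ]; ring,
      Complex.exp_neg, exp_pi_mul_I]
    norm_num
  have h3 : jacobiTheta₂ (thZ τ - τ) τ = jacobiTheta₂ (thZ τ) τ := by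
    rw [show thZ τ - τ = -(thZ τ) + 1 by rw [thZ]; ring, jacobiTheta₂_add_left,
      jacobiTheta₂_neg_left]
  rw [h3, h2] at h1
  linear_combination h1 / 2

lemma thF_lat (hτ : 0 < τ.im) (m n : ℤ) : jacobiTheta₂ (thZ τ + m + n * τ) τ = 0 := by
  apply prop_lat (P := fun z => jacobiTheta₂ z τ = 0)
  · intro z
    rw [jacobiTheta₂_add_left]
  · intro z
    rw [thF_add_tau]
    constructor
    · intro h; rw [h, mul_zero]
    · intro h
      rcases mul_eq_zero.mp h with h' | h'
      · exact absurd h' (cfac_ne z)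
      · exact h'
  · exact thF_thZ hτ

noncomputable def thH (τ : ℂ) (z : ℂ) : ℂ :=
  if thG τ z = 0 then deriv (fun w => jacobiTheta₂ w τ) z / deriv (thG τ) z
  else jacobiTheta₂ z τ / thG τ z

lemma diff_thF (hτ : 0 < τ.im) : Differentiable ℂ (fun z => jacobiTheta₂ z τ) := fun z =>
  differentiableAt_jacobiTheta₂_fst z hτ

lemma int_cast_abs_lt_one {k : ℤ} (h : |(k:ℝ)| < 1) : k = 0 := by
  have h2 : ((|k| : ℤ) : ℝ) < 1 := by rwa [Int.cast_abs]
  have h3 : |k| < 1 := by exact_mod_cast h2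
  have h4 := abs_lt.mp h3
  omega

lemma lat_unique (hτ : 0 < τ.im) {p z : ℂ} (hp : ∃ m n : ℤ, p = thZ τ + m + n*τ)
    (hz : ∃ m n : ℤ, z = thZ τ + m + n*τ) (hd : dist z p < min 1 τ.im) : z = p := by
  obtain ⟨m, n, rfl⟩ := hp
  obtain ⟨m', n', rfl⟩ := hz
  set d : ℂ := ((m' - m : ℤ) : ℂ) + ((n' - n : ℤ) : ℂ) * τ with hd_def
  have hdiff : thZ τ + m' + n' * τ - (thZ τ + m + n * τ) = d := by
    rw [hd_def]; push_cast; ring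
  have hnorm : ‖d‖ < min 1 τ.im := by
    rw [← hdiff]
    rwa [← dist_eq_norm]
  have him : d.im = ((n' - n : ℤ) : ℝ) * τ.im := by
    rw [hd_def]
    simp [Complex.add_im, Complex.mul_im]
  have h1 : |d.im| ≤ ‖d‖ := Complex.abs_im_le_norm d
  have hn : n' = n := by
    have h2 : |((n' - n : ℤ) : ℝ)| * τ.im < τ.im := by
      have := lt_of_le_of_lt h1 (hnorm.trans_le (min_le_right _ _))
      rwa [him, abs_mul, abs_of_pos hτ] at this
    have h3 : |((n' - n : ℤ) : ℝ)| < 1 := by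
      by_contra hcon
      push_neg at hcon
      nlinarith
    have := int_cast_abs_lt_one h3
    omega
  have hm : m' = m := by
    subst hn
    have hd2 : d = ((m' - m : ℤ) : ℂ) := by rw [hd_def]; push_cast; ring
    have : ‖d‖ < 1 := hnorm.trans_le (min_le_left _ _)
    rw [hd2] at this
    have h4 : |((m' - m : ℤ) : ℝ)| < 1 := by
      rwa [Complex.norm_intCast] at this
    have := int_cast_abs_lt_one h4
    omega
  subst hn; subst hm; rfl

lemma diff_thH (hτ : 0 < τ.im) : Differentiable ℂ (thH τ) := by
  intro p
  by_cases hp : thG τ p = 0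
  · -- lattice point
    have hlat : ∃ m n : ℤ, p = thZ τ + m + n*τ := thG_zero_lat hτ p hp
    have hF0 : jacobiTheta₂ p τ = 0 := by
      obtain ⟨m, n, rfl⟩ := hlat; exact thF_lat hτ m n
    have hG' : deriv (thG τ) p ≠ 0 := by
      obtain ⟨m, n, hp'⟩ := hlat; rw [hp']; exact (thG_lat hτ m n).2
    have hiso : ∀ᶠ z in 𝓝 p, z = p ∨ thG τ z ≠ 0 := by
      rw [Metric.eventually_nhds_iff]
      refine ⟨min 1 τ.im, lt_min one_pos hτ, fun z hz => ?_⟩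
      by_cases h0 : thG τ z = 0
      · exact Or.inl (lat_unique hτ hlat (thG_zero_lat hτ z h0) hz)
      · exact Or.inr h0
    obtain ⟨pF, hpF⟩ := (diff_thF hτ).analyticAt p
    obtain ⟨pG, hpG⟩ := (diff_thG hτ).analyticAt p
    have hdF : AnalyticAt ℂ (dslope (fun w => jacobiTheta₂ w τ) p) p :=
      ⟨_, hpF.has_fpower_series_dslope_fslope⟩
    have hdG : AnalyticAt ℂ (dslope (thG τ) p) p :=
      ⟨_, hpG.has_fpower_series_dslope_fslope⟩
    have hdGp : dslope (thG τ) p p ≠ 0 := by rwa [dslope_same]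
    have hφ : DifferentiableAt ℂ
        (fun z => dslope (fun w => jacobiTheta₂ w τ) p z / dslope (thG τ) p z) p :=
      (hdF.differentiableAt).div (hdG.differentiableAt) hdGp
    apply hφ.congr_of_eventuallyEq
    filter_upwards [hiso] with z hz
    rcases hz with rfl | hGz
    · simp only [thH]; rw [if_pos hp, dslope_same, dslope_same]
    · have hzp : z ≠ p := by
        intro h; rw [h] at hGz; exact hGz hp
      simp only [thH]
      rw [if_neg hGz, dslope_of_ne _ hzp, dslope_of_ne _ hzp, slope, slope, hF0, hp]
      simp only [vsub_eq_sub, sub_zero, smul_eq_mul]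
      rw [mul_div_mul_left _ _ (inv_ne_zero (sub_ne_zero.mpr hzp))]
  · have hopen : {z | ¬ thG τ z = 0} ∈ 𝓝 p := by
      have hO : IsOpen {z | ¬ thG τ z = 0} := by
        rw [show {z | ¬ thG τ z = 0} = {z | thG τ z = 0}ᶜ from rfl]
        exact isOpen_compl_iff.mpr (isClosed_eq (diff_thG hτ).continuous continuous_const)
      exact hO.mem_nhds hp
    have heq : thH τ =ᶠ[𝓝 p] fun z => jacobiTheta₂ z τ / thG τ z := by
      filter_upwards [hopen] with z hz
      simp only [thH]
      rw [if_neg hz]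
    exact (((diff_thF hτ) p).div ((diff_thG hτ) p) hp).congr_of_eventuallyEq heq

lemma lat_countable (hτ : 0 < τ.im) : {z | thG τ z = 0}.Countable := by
  apply Set.Countable.mono _ (Set.countable_range
    (fun mn : ℤ × ℤ => thZ τ + mn.1 + mn.2 * τ))
  intro z hz
  obtain ⟨m, n, h⟩ := thG_zero_lat hτ z hz
  exact ⟨(m, n), h.symm⟩

lemma dense_Gne (hτ : 0 < τ.im) : Dense {z | ¬ thG τ z = 0} := by
  have := (lat_countable hτ).dense_compl ℂ
  convert this using 1
  rfl

lemma thH_add_one (hτ : 0 < τ.im) (z : ℂ) : thH τ (z + 1) = thH τ z := by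
  have hc1 : Continuous (fun w => thH τ (w + 1)) :=
    (diff_thH hτ).continuous.comp (continuous_id.add continuous_const)
  have hc2 : Continuous (thH τ) := (diff_thH hτ).continuous
  refine congrFun (Continuous.ext_on (dense_Gne hτ) hc1 hc2 ?_) z
  intro w hw
  simp only [Set.mem_setOf_eq] at hw
  have hw1 : ¬ thG τ (w + 1) = 0 := by rwa [thG_add_one]
  simp only [thH]
  rw [if_neg hw1, if_neg hw, jacobiTheta₂_add_left, thG_add_one]

lemma thH_add_tau (hτ : 0 < τ.im) (z : ℂ) : thH τ (z + τ) = thH τ z := by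
  have hc1 : Continuous (fun w => thH τ (w + τ)) :=
    (diff_thH hτ).continuous.comp (continuous_id.add continuous_const)
  have hc2 : Continuous (thH τ) := (diff_thH hτ).continuous
  refine congrFun (Continuous.ext_on (dense_Gne hτ) hc1 hc2 ?_) z
  intro w hw
  simp only [Set.mem_setOf_eq] at hw
  have hwτ : ¬ thG τ (w + τ) = 0 := by
    rw [thG_add_tau hτ]
    exact mul_ne_zero (cfac_ne w) hw
  simp only [thH]
  rw [if_neg hwτ, if_neg hw, thF_add_tau, thG_add_tau hτ,
    mul_div_mul_left _ _ (cfac_ne w)]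

lemma fun_shift {f : ℂ → ℂ} {c : ℂ} (h : ∀ z, f (z + c) = f z) :
    ∀ (k : ℤ) (z : ℂ), f (z + k * c) = f z := by
  intro k
  induction k using Int.induction_on with
  | zero => intro z; simp
  | succ n ih =>
    intro z
    have e : z + (((n : ℤ) + 1 : ℤ) : ℂ) * c = (z + ((n : ℤ) : ℂ) * c) + c := by push_cast; ring
    rw [e, h, ih]
  | pred n ih =>
    intro z
    have e : z + ((-(n : ℤ) - 1 : ℤ) : ℂ) * c = (z + ((-(n : ℤ) - 1 : ℤ) : ℂ) * c) := rfl
    have e2 : (z + ((-(n : ℤ) - 1 : ℤ) : ℂ) * c) + c = z + ((-(n : ℤ) : ℤ) : ℂ) * c := by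
      push_cast; ring
    have := h (z + ((-(n : ℤ) - 1 : ℤ) : ℂ) * c)
    rw [e2] at this
    rw [← this, ih]

lemma thH_bounded (hτ : 0 < τ.im) : Bornology.IsBounded (Set.range (thH τ)) := by
  set K : Set ℂ := (fun p : ℝ × ℝ => (p.1 : ℂ) + (p.2 : ℂ) * τ) '' (Set.Icc 0 1 ×ˢ Set.Icc 0 1)
    with hK_def
  have hKc : IsCompact K := by
    apply (isCompact_Icc.prod isCompact_Icc).image
    exact (Complex.continuous_ofReal.comp continuous_fst).add
      ((Complex.continuous_ofReal.comp continuous_snd).mul continuous_const)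
  have hsub : Set.range (thH τ) ⊆ thH τ '' K := by
    rintro - ⟨z, rfl⟩
    set b : ℝ := z.im / τ.im with hb_def
    set a : ℝ := z.re - b * τ.re with ha_def
    set w : ℂ := ((Int.fract a : ℝ) : ℂ) + ((Int.fract b : ℝ) : ℂ) * τ with hw_def
    have hzw : z = w + (⌊a⌋ : ℤ) * (1:ℂ) + (⌊b⌋ : ℤ) * τ := by
      have hab : z = ((a : ℝ) : ℂ) + ((b : ℝ) : ℂ) * τ := by
        apply Complex.ext
        · simp [ha_def]
        · simp [hb_def]
          field_simp
      rw [hab, hw_def]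
      have hfa : (Int.fract a : ℝ) = a - ⌊a⌋ := Int.self_sub_floor a ▸ rfl
      have hfb : (Int.fract b : ℝ) = b - ⌊b⌋ := Int.self_sub_floor b ▸ rfl
      rw [hfa, hfb]
      push_cast
      ring
    have hval : thH τ z = thH τ w := by
      rw [hzw]
      have h1 := fun_shift (f := thH τ) (c := (1:ℂ)) (fun u => thH_add_one hτ u) ⌊a⌋ w
      have h2 := fun_shift (f := thH τ) (c := τ) (fun u => thH_add_tau hτ u) ⌊b⌋
        (w + (⌊a⌋ : ℤ) * (1:ℂ))
      rw [h2, h1]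
    refine ⟨w, ?_, hval.symm⟩
    refine ⟨(Int.fract a, Int.fract b), ?_, rfl⟩
    constructor
    · exact ⟨Int.fract_nonneg a, (Int.fract_lt_one a).le⟩
    · exact ⟨Int.fract_nonneg b, (Int.fract_lt_one b).le⟩
  exact ((hKc.image (diff_thH hτ).continuous).isBounded).subset hsub

lemma thH_const (hτ : 0 < τ.im) (z : ℂ) : thH τ z = thH τ (thZ τ) :=
  (diff_thH hτ).apply_eq_apply_of_bounded (thH_bounded hτ) z (thZ τ)

lemma thF_eq_mul_thG (hτ : 0 < τ.im) (z : ℂ) :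
    jacobiTheta₂ z τ = thH τ (thZ τ) * thG τ z := by
  by_cases hz : thG τ z = 0
  · rw [hz, mul_zero]
    obtain ⟨m, n, rfl⟩ := thG_zero_lat hτ z hz
    exact thF_lat hτ m n
  · have h := thH_const hτ z
    simp only [thH] at h
    rw [if_neg hz] at h
    rw [div_eq_iff hz] at h
    rw [h]
    simp only [thH]

lemma summable_exp_sq (hτ : 0 < τ.im) : Summable (fun n : ℤ => Real.exp (-π * n^2 * τ.im)) := by
  have h := summable_pow_mul_jacobiTheta₂_term_bound 0 hτ 0
  apply h.congr
  intro n
  simp only [pow_zero, one_mul, mul_zero, zero_mul, sub_zero]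
  congr 1
  ring

lemma thF_exists_ne (hτ : 0 < τ.im) : ¬ (∀ z : ℂ, jacobiTheta₂ z τ = 0) := by
  intro hall
  set μ := MeasureTheory.volume.restrict (Set.Ioc (0:ℝ) 1) with hμ
  have hmeas : ∀ n : ℤ, MeasureTheory.AEStronglyMeasurable
      (fun x : ℝ => jacobiTheta₂_term n (x : ℂ) τ) μ := by
    intro n
    apply Continuous.aestronglyMeasurable
    have : (fun x : ℝ => jacobiTheta₂_term n (x:ℂ) τ) =
        fun x : ℝ => cexp (2 * π * I * n * (x:ℂ) + π * I * n^2 * τ) := rfl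
    rw [this]
    exact Complex.continuous_exp.comp
      ((continuous_const.mul Complex.continuous_ofReal).add continuous_const)
  have hnorm : ∀ (n : ℤ) (x : ℝ), ‖jacobiTheta₂_term n (x:ℂ) τ‖ = Real.exp (-π * n^2 * τ.im) := by
    intro n x
    rw [norm_jacobiTheta₂_term]
    simp [Complex.ofReal_im]
  have hf' : ∑' n : ℤ, ∫⁻ x, ‖jacobiTheta₂_term n (x:ℂ) τ‖₊ ∂μ ≠ ⊤ := by
    have heval : ∀ n : ℤ, ∫⁻ x, ‖jacobiTheta₂_term n (x:ℂ) τ‖₊ ∂μ =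
        ENNReal.ofReal (Real.exp (-π * n^2 * τ.im)) := by
      intro n
      have h1 : (fun x : ℝ => (‖jacobiTheta₂_term n (x:ℂ) τ‖₊ : ENNReal)) =
          fun _x : ℝ => ENNReal.ofReal (Real.exp (-π * n^2 * τ.im)) := by
        funext x
        rw [← hnorm n x]; exact (ofReal_norm _).symm
      rw [h1, MeasureTheory.lintegral_const]
      rw [hμ, MeasureTheory.Measure.restrict_apply MeasurableSet.univ, Set.univ_inter,
        Real.volume_Ioc]
      simp
    simp_rw [heval]
    rw [← ENNReal.ofReal_tsum_of_nonneg (fun n => (Real.exp_pos _).le) (summable_exp_sq hτ)]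
    exact ENNReal.ofReal_ne_top
  have hint := MeasureTheory.integral_tsum hmeas hf'
  have hLHS : ∫ x, (∑' n : ℤ, jacobiTheta₂_term n (x:ℂ) τ) ∂μ = 0 := by
    have : ∀ x : ℝ, (∑' n : ℤ, jacobiTheta₂_term n (x:ℂ) τ) = 0 := by
      intro x
      rw [← jacobiTheta₂]
      exact hall _
    simp_rw [this]
    exact MeasureTheory.integral_zero _ _
  have hterm : ∀ n : ℤ, (∫ x, jacobiTheta₂_term n (x:ℂ) τ ∂μ) =
      if n = 0 then 1 else 0 := by
    intro n
    have hsplit : ∀ x : ℝ, jacobiTheta₂_term n (x:ℂ) τ =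
        cexp (π * I * n^2 * τ) * cexp ((2 * π * I * n) * (x:ℂ)) := by
      intro x
      rw [jacobiTheta₂_term, ← Complex.exp_add]
      congr 1
      ring
    simp_rw [hsplit]
    rw [MeasureTheory.integral_const_mul]
    have hio : ∫ x, cexp ((2 * π * I * n) * (x:ℂ)) ∂μ =
        ∫ x in (0:ℝ)..1, cexp ((2 * π * I * n) * (x:ℂ)) := by
      rw [intervalIntegral.integral_of_le zero_le_one, hμ]
    rw [hio]
    by_cases hn : n = 0
    · subst hn
      simp
    · have hc : (2 * (π:ℂ) * I * n) ≠ 0 := by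
        apply mul_ne_zero two_pi_I_ne
        exact_mod_cast hn
      rw [if_neg hn]
      rw [integral_exp_mul_complex hc]
      have h2 : cexp (2 * (π:ℂ) * I * n * ((1:ℝ):ℂ)) = 1 := by
        push_cast
        rw [mul_one, show 2 * (π:ℂ) * I * n = n * (2 * π * I) by ring,
          exp_int_mul_two_pi_mul_I]
      rw [h2]
      simp
  have hRHS : (∑' n : ℤ, ∫ x, jacobiTheta₂_term n (x:ℂ) τ ∂μ) = 1 := by
    simp_rw [hterm]
    rw [tsum_eq_single 0 (fun b hb => if_neg hb)]
    simp
  rw [hLHS, hRHS] at hint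
  exact one_ne_zero hint.symm

lemma thC_ne (hτ : 0 < τ.im) : thH τ (thZ τ) ≠ 0 := by
  intro h
  apply thF_exists_ne hτ
  intro z
  rw [thF_eq_mul_thG hτ z, h, zero_mul]

lemma thF_zero_iff (hτ : 0 < τ.im) (z : ℂ) :
    jacobiTheta₂ z τ = 0 ↔ ∃ m n : ℤ, z = thZ τ + m + n * τ := by
  rw [thF_eq_mul_thG hτ z, mul_eq_zero]
  constructor
  · rintro (h | h)
    · exact absurd h (thC_ne hτ)
    · exact thG_zero_lat hτ z h
  · rintro ⟨m, n, rfl⟩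
    exact Or.inr (thG_lat hτ m n).1

lemma deriv_thF_eq (hτ : 0 < τ.im) (z : ℂ) :
    deriv (fun w => jacobiTheta₂ w τ) z = thH τ (thZ τ) * deriv (thG τ) z := by
  have h : (fun w => jacobiTheta₂ w τ) = fun w => thH τ (thZ τ) * thG τ w :=
    funext (thF_eq_mul_thG hτ)
  rw [h, deriv_const_mul _ ((diff_thG hτ) z)]

lemma deriv_thF_ne (hτ : 0 < τ.im) {z : ℂ} (hz : jacobiTheta₂ z τ = 0) :
    deriv (fun w => jacobiTheta₂ w τ) z ≠ 0 := by
  rw [deriv_thF_eq hτ]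
  obtain ⟨m, n, rfl⟩ := (thF_zero_iff hτ z).mp hz
  exact mul_ne_zero (thC_ne hτ) (thG_lat hτ m n).2

end Theta

end JTAux

open JTAux in
lemma jTheta_eq (τ t : ℂ) : jTheta τ t =
    -(cexp (π * I * τ/4 + π * I/2) * (cexp (π * I * t) *
      jacobiTheta₂ (t + thZ τ) τ)) := by
  rw [jTheta, jacobiTheta₂, ← tsum_mul_left, ← tsum_mul_left, neg_inj]
  apply tsum_congr
  intro j
  rw [jacobiTheta₂_term, ← Complex.exp_add, ← Complex.exp_add]
  congr 1
  rw [thZ]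
  push_cast
  ring

open JTAux in
/-- The zeros of the Jacobi theta function are exactly the lattice points ℤ + τℤ,
and each zero is simple (the derivative does not vanish there). -/
theorem jTheta_zeros (τ : ℂ) (hτ : 0 < τ.im) (t : ℂ) :
    (jTheta τ t = 0 ↔ ∃ m n : ℤ, t = (m : ℂ) + (n : ℂ) * τ) ∧
    (jTheta τ t = 0 → deriv (jTheta τ) t ≠ 0) := by
  have hzero : jTheta τ t = 0 ↔ jacobiTheta₂ (t + thZ τ) τ = 0 := by
    rw [jTheta_eq, neg_eq_zero, mul_eq_zero, mul_eq_zero]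
    constructor
    · rintro (h | h | h)
      · exact absurd h (Complex.exp_ne_zero _)
      · exact absurd h (Complex.exp_ne_zero _)
      · exact h
    · intro h; exact Or.inr (Or.inr h)
  constructor
  · rw [hzero, thF_zero_iff hτ]
    constructor
    · rintro ⟨m, n, h⟩
      exact ⟨m, n, by linear_combination h⟩
    · rintro ⟨m, n, rfl⟩
      exact ⟨m, n, by ring⟩
  · intro h0
    have hF : jacobiTheta₂ (t + thZ τ) τ = 0 := hzero.mp h0
    -- compute the derivative of jTheta τ at t
    have hfun : jTheta τ = fun s => -(cexp (π * I * τ/4 + π * I/2) * (cexp (π * I * s) *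
        jacobiTheta₂ (s + thZ τ) τ)) := funext (jTheta_eq τ)
    have hg : HasDerivAt (fun s : ℂ => cexp (π * I * s)) (π * I * cexp (π * I * t)) t := by
      have h : HasDerivAt (fun s : ℂ => π * I * s) ((π:ℂ) * I) t := by
        simpa using (hasDerivAt_id t).const_mul ((π:ℂ) * I)
      convert h.cexp using 1
      · rfl
      ring
    have hFc : HasDerivAt (fun s : ℂ => jacobiTheta₂ (s + thZ τ) τ)
        (deriv (fun w => jacobiTheta₂ w τ) (t + thZ τ)) t := by
      have hF' : HasDerivAt (fun w => jacobiTheta₂ w τ)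
          (deriv (fun w => jacobiTheta₂ w τ) (t + thZ τ)) (t + thZ τ) :=
        ((diff_thF hτ) (t + thZ τ)).hasDerivAt
      have := hF'.comp t ((hasDerivAt_id t).add_const (thZ τ))
      rw [mul_one] at this; exact this
    have hd : HasDerivAt (jTheta τ)
        (-(cexp (π * I * τ/4 + π * I/2) *
          (π * I * cexp (π * I * t) * jacobiTheta₂ (t + thZ τ) τ +
            cexp (π * I * t) * deriv (fun w => jacobiTheta₂ w τ) (t + thZ τ)))) t := by
      rw [hfun]
      exact ((hg.mul hFc).const_mul _).neg
    rw [hd.deriv, hF, mul_zero, zero_add]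
    apply neg_ne_zero.mpr
    exact mul_ne_zero (Complex.exp_ne_zero _)
      (mul_ne_zero (Complex.exp_ne_zero _) (deriv_thF_ne hτ hF))
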